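/- (Gradient flow identity.) Under the hypotheses of the divergence form representation (V_j eigenvectors of the modular operator of σ with eigenvalues e^{-ω_j}, {V_j} = {V_j*}, ω_{j*} = −ω_j), define ρ̂_j = ∫₀¹ (e^{ω_j/2}ρ)^{1−s} ⊗ (e^{-ω_j/2}ρ)^{s} ds and K_ρ A = Σ_j ∂_j†(ρ̂_j # ∂_j A) with ∂_j A = [V_j, A], ∂_j† A = [V_j*, A]. Then for every positive definite density matrix ρ: K_ρ(log ρ − log σ) = − L† ρ, where L† ρ = Σ_j e^{-ω_j/2}([V_j, ρ V_j*] + [V_j ρ, V_j*]). -/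

import Mathlib

open Matrix
open scoped ComplexOrder


-- scalar derivative lemma
lemma hAux (α β : ℝ) (hα : 0 < α) (hβ : 0 < β) (s : ℝ) :
    HasDerivAt (fun s : ℝ => α ^ (1 - s) * β ^ s)
      (α ^ (1 - s) * β ^ s * (Real.log β - Real.log α)) s := by
  have hrw : ∀ t : ℝ, α ^ (1 - t) * β ^ t
      = Real.exp ((1 - t) * Real.log α + t * Real.log β) := by
    intro t
    rw [Real.rpow_def_of_pos hα, Real.rpow_def_of_pos hβ, ← Real.exp_add]; ring_nf
  have h1 : HasDerivAt (fun t : ℝ => (1 - t) * Real.log α + t * Real.log β)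
      (Real.log β - Real.log α) s := by
    have : HasDerivAt (fun t : ℝ => (1 - t) * Real.log α + t * Real.log β)
        (-1 * Real.log α + 1 * Real.log β) s := (((hasDerivAt_id s).const_sub 1).mul_const (Real.log α)).add
      ((hasDerivAt_id s).mul_const (Real.log β))
    convert this using 1
    ring
  have := h1.exp
  simp only [← hrw] at this
  exact this

lemma intAux (α β : ℝ) (hα : 0 < α) (hβ : 0 < β) :
    ∫ s in (0:ℝ)..1, α ^ (1 - s) * β ^ s * (Real.log β - Real.log α) = β - α := by
  rw [intervalIntegral.integral_eq_sub_of_hasDerivAt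
    (f := fun s : ℝ => α ^ (1 - s) * β ^ s) (fun s _ => hAux α β hα hβ s)]
  · simp [Real.rpow_zero, Real.rpow_one]
  · apply Continuous.intervalIntegrable
    have hrw : ∀ t : ℝ, α ^ (1 - t) * β ^ t
        = Real.exp ((1 - t) * Real.log α + t * Real.log β) := by
      intro t
      rw [Real.rpow_def_of_pos hα, Real.rpow_def_of_pos hβ, ← Real.exp_add]; ring_nf
    simp only [hrw]
    fun_prop

lemma cfc_spectral {n : ℕ} (ρ : Matrix (Fin n) (Fin n) ℂ) (hH : ρ.IsHermitian) (f : ℝ → ℝ) :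
    cfc f ρ = (hH.eigenvectorUnitary : Matrix (Fin n) (Fin n) ℂ) *
      Matrix.diagonal (fun i => (f (hH.eigenvalues i) : ℂ)) *
      star (hH.eigenvectorUnitary : Matrix (Fin n) (Fin n) ℂ) := by
  rw [hH.cfc_eq]; rfl

lemma keyB {n : ℕ} (ρ : Matrix (Fin n) (Fin n) ℂ) (hρ : ρ.PosDef)
    (V : Matrix (Fin n) (Fin n) ℂ) (ω : ℝ)
    (pw : ℝ → ℝ → Matrix (Fin n) (Fin n) ℂ)
    (hpw : ∀ c t, pw c t = cfc (fun x : ℝ => (Real.exp c * x) ^ t) ρ) :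
    (Matrix.of fun i k =>
        ∫ s in (0:ℝ)..1, (pw (ω / 2) (1 - s) *
          (V * cfc Real.log ρ - cfc Real.log ρ * V - (ω:ℂ) • V) * pw (-(ω) / 2) s) i k)
      = (Real.exp (-(ω) / 2) : ℂ) • (V * ρ) - (Real.exp (ω / 2) : ℂ) • (ρ * V) := by
  have hH : ρ.IsHermitian := hρ.1
  set u : Matrix (Fin n) (Fin n) ℂ := (hH.eigenvectorUnitary : Matrix (Fin n) (Fin n) ℂ) with hu_def
  set lam : Fin n → ℝ := hH.eigenvalues with hlam_def
  have hlp : ∀ i, 0 < lam i := hρ.eigenvalues_pos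
  have hu1 : u * star u = 1 := (Matrix.mem_unitaryGroup_iff).mp hH.eigenvectorUnitary.2
  have hu2 : star u * u = 1 := (Matrix.mem_unitaryGroup_iff').mp hH.eigenvectorUnitary.2
  set W : Matrix (Fin n) (Fin n) ℂ := star u * V * u with hW_def
  set C : Matrix (Fin n) (Fin n) ℂ :=
    V * cfc Real.log ρ - cfc Real.log ρ * V - (ω:ℂ) • V with hC_def
  set α : Fin n → ℝ := fun p => Real.exp (ω / 2) * lam p with hα_def
  set β : Fin n → ℝ := fun q => Real.exp (-(ω) / 2) * lam q with hβ_def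
  have hαpos : ∀ p, 0 < α p := fun p => mul_pos (Real.exp_pos _) (hlp p)
  have hβpos : ∀ q, 0 < β q := fun q => mul_pos (Real.exp_pos _) (hlp q)
  -- basic cancellation facts
  have hl : ∀ M : Matrix (Fin n) (Fin n) ℂ, u * (star u * M) = M := fun M => by
    rw [← Matrix.mul_assoc, hu1, Matrix.one_mul]
  have hl' : ∀ M : Matrix (Fin n) (Fin n) ℂ, star u * (u * M) = M := fun M => by
    rw [← Matrix.mul_assoc, hu2, Matrix.one_mul]
  have hr : ∀ M : Matrix (Fin n) (Fin n) ℂ, M * u * star u = M := fun M => by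
    rw [Matrix.mul_assoc, hu1, Matrix.mul_one]
  have hr' : ∀ M : Matrix (Fin n) (Fin n) ℂ, M * star u * u = M := fun M => by
    rw [Matrix.mul_assoc, hu2, Matrix.mul_one]
  have hV : V = u * W * star u := by
    rw [hW_def, Matrix.mul_assoc (star u), hl, hr]
  have hρd : ρ = u * Matrix.diagonal (fun p => (lam p : ℂ)) * star u := hH.spectral_theorem
  have hlog_conj : star u * cfc Real.log ρ * u
      = Matrix.diagonal (fun p => ((Real.log (lam p) : ℝ) : ℂ)) := by
    rw [cfc_spectral ρ hH, ← hu_def, ← hlam_def]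
    simp only [Matrix.mul_assoc, hl', hu2, Matrix.mul_one]
  -- entries of conjugated C
  have hW' : ∀ p q, (star u * C * u) p q
      = W p q * ((Real.log (lam q) - Real.log (lam p) - ω : ℝ) : ℂ) := by
    intro p q
    have hCconj : star u * C * u
        = W * Matrix.diagonal (fun p => ((Real.log (lam p) : ℝ) : ℂ))
          - Matrix.diagonal (fun p => ((Real.log (lam p) : ℝ) : ℂ)) * W - (ω:ℂ) • W := by
      rw [hC_def]
      have h1 : star u * (V * cfc Real.log ρ) * u
          = W * Matrix.diagonal (fun p => ((Real.log (lam p) : ℝ) : ℂ)) := by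
        rw [← hlog_conj, hW_def]
        simp only [Matrix.mul_assoc, hl]
      have h2 : star u * (cfc Real.log ρ * V) * u
          = Matrix.diagonal (fun p => ((Real.log (lam p) : ℝ) : ℂ)) * W := by
        rw [← hlog_conj, hW_def]
        simp only [Matrix.mul_assoc, hl]
      simp only [Matrix.mul_sub, Matrix.sub_mul, Matrix.mul_smul, Matrix.smul_mul]
      rw [h1, h2]
    rw [hCconj]
    simp only [Matrix.sub_apply, Matrix.smul_apply, Matrix.mul_diagonal, Matrix.diagonal_mul,
      smul_eq_mul]
    push_cast
    ring
  -- entries of conjugation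
  have entry3 : ∀ (M : Matrix (Fin n) (Fin n) ℂ) i k,
      (u * M * star u) i k = ∑ p, ∑ q, u i p * M p q * (star u) q k := by
    intro M i k
    simp only [Matrix.mul_apply, Finset.sum_mul]
    exact Finset.sum_comm
  -- pw spectral form
  have hpw' : ∀ c t, pw c t
      = u * Matrix.diagonal (fun p => (((Real.exp c * lam p) ^ t : ℝ) : ℂ)) * star u := by
    intro c t
    rw [hpw, cfc_spectral ρ hH]
  -- pointwise integrand formula
  have hint : ∀ (i k : Fin n) (s : ℝ), (pw (ω / 2) (1 - s) * C * pw (-(ω) / 2) s) i k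
      = ∑ p, ∑ q, (u i p * W p q * (star u) q k) *
          ((α p ^ (1 - s) * β q ^ s * (Real.log (β q) - Real.log (α p)) : ℝ) : ℂ) := by
    intro i k s
    have hprod : pw (ω / 2) (1 - s) * C * pw (-(ω) / 2) s
        = u * (Matrix.diagonal (fun p => ((α p ^ (1 - s) : ℝ) : ℂ)) * (star u * C * u) *
            Matrix.diagonal (fun q => ((β q ^ s : ℝ) : ℂ))) * star u := by
      rw [hpw', hpw']
      simp only [Matrix.mul_assoc, hα_def, hβ_def]
    rw [hprod, entry3]
    refine Finset.sum_congr rfl fun p _ => Finset.sum_congr rfl fun q _ => ?_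
    rw [Matrix.mul_diagonal, Matrix.diagonal_mul, hW' p q]
    have hlg : Real.log (β q) - Real.log (α p) = Real.log (lam q) - Real.log (lam p) - ω := by
      rw [hβ_def, hα_def]
      simp only
      rw [Real.log_mul (Real.exp_ne_zero _) (ne_of_gt (hlp q)),
        Real.log_mul (Real.exp_ne_zero _) (ne_of_gt (hlp p)), Real.log_exp, Real.log_exp]
      ring
    rw [hlg]
    push_cast
    ring
  -- continuity
  have hcont : ∀ (a b : ℝ), 0 < a → 0 < b →
      Continuous (fun s : ℝ => a ^ (1 - s) * b ^ s * (Real.log b - Real.log a)) := by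
    intro a b ha hb
    have hrw : ∀ t : ℝ, a ^ (1 - t) * b ^ t
        = Real.exp ((1 - t) * Real.log a + t * Real.log b) := by
      intro t
      rw [Real.rpow_def_of_pos ha, Real.rpow_def_of_pos hb, ← Real.exp_add]; ring_nf
    simp only [hrw]
    fun_prop
  ext i k
  simp only [Matrix.of_apply]
  calc (∫ s in (0:ℝ)..1, (pw (ω / 2) (1 - s) * C * pw (-(ω) / 2) s) i k)
      = ∫ s in (0:ℝ)..1, ∑ p, ∑ q, (u i p * W p q * (star u) q k) *
          ((α p ^ (1 - s) * β q ^ s * (Real.log (β q) - Real.log (α p)) : ℝ) : ℂ) := by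
        refine intervalIntegral.integral_congr fun s _ => hint i k s
    _ = ∑ p, ∑ q, (u i p * W p q * (star u) q k) * ((β q - α p : ℝ) : ℂ) := by
        rw [intervalIntegral.integral_finset_sum]
        · refine Finset.sum_congr rfl fun p _ => ?_
          rw [intervalIntegral.integral_finset_sum]
          · refine Finset.sum_congr rfl fun q _ => ?_
            rw [intervalIntegral.integral_const_mul, intervalIntegral.integral_ofReal,
              intAux (α p) (β q) (hαpos p) (hβpos q)]
          · intro q _
            exact (continuous_const.mul (Complex.continuous_ofReal.comp
              (hcont (α p) (β q) (hαpos p) (hβpos q)))).intervalIntegrable 0 1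
        · intro p _
          apply Continuous.intervalIntegrable
          exact continuous_finset_sum _ fun q _ => continuous_const.mul
            (Complex.continuous_ofReal.comp (hcont (α p) (β q) (hαpos p) (hβpos q)))
    _ = ((Real.exp (-(ω) / 2) : ℂ) • (V * ρ) - (Real.exp (ω / 2) : ℂ) • (ρ * V)) i k := by
        have h1 : V * ρ = u * (W * Matrix.diagonal (fun p => (lam p : ℂ))) * star u := by
          conv_lhs => rw [hV, hρd]
          simp only [Matrix.mul_assoc, hl']
        have h2 : ρ * V = u * (Matrix.diagonal (fun p => (lam p : ℂ)) * W) * star u := by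
          conv_lhs => rw [hV, hρd]
          simp only [Matrix.mul_assoc, hl']
        simp only [Matrix.sub_apply, Matrix.smul_apply, smul_eq_mul, h1, h2, entry3]
        rw [Finset.mul_sum, Finset.mul_sum, ← Finset.sum_sub_distrib]
        refine Finset.sum_congr rfl fun p _ => ?_
        rw [Finset.mul_sum, Finset.mul_sum, ← Finset.sum_sub_distrib]
        refine Finset.sum_congr rfl fun q _ => ?_
        rw [Matrix.mul_diagonal, Matrix.diagonal_mul, hβ_def, hα_def]
        push_cast
        ring

lemma diagComm' {n : ℕ} (μ : Fin n → ℝ) (hμ : ∀ i, 0 < μ i)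
    (W : Matrix (Fin n) (Fin n) ℂ) (ω : ℝ)
    (h : Matrix.diagonal (fun i => (μ i : ℂ)) * W
        = (Real.exp (-ω) : ℂ) • (W * Matrix.diagonal (fun i => (μ i : ℂ)))) :
    Matrix.diagonal (fun i => (Real.log (μ i) : ℂ)) * W
      - W * Matrix.diagonal (fun i => (Real.log (μ i) : ℂ)) = (-(ω:ℂ)) • W := by
  ext p q
  have hpq := congrFun (congrFun h p) q
  simp only [Matrix.diagonal_mul, Matrix.mul_diagonal, Matrix.smul_apply, smul_eq_mul] at hpq ⊢
  simp only [Matrix.sub_apply, Matrix.diagonal_mul, Matrix.mul_diagonal]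
  rcases eq_or_ne (W p q) 0 with h0 | h0
  · simp [h0]
  · have hμeq : (μ p : ℂ) = Real.exp (-ω) * μ q := by
      have hz : ((μ p : ℂ) - Real.exp (-ω) * μ q) * W p q = 0 := by
        linear_combination hpq
      rcases mul_eq_zero.mp hz with h' | h'
      · exact sub_eq_zero.mp h'
      · exact absurd h' h0
    have hμr : μ p = Real.exp (-ω) * μ q := by exact_mod_cast hμeq
    have hlog : Real.log (μ p) = -ω + Real.log (μ q) := by
      rw [hμr, Real.log_mul (Real.exp_ne_zero _) (ne_of_gt (hμ q)), Real.log_exp]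
    rw [hlog]
    push_cast
    ring

lemma cfc_spectral' {n : ℕ} (ρ : Matrix (Fin n) (Fin n) ℂ) (hH : ρ.IsHermitian) (f : ℝ → ℝ) :
    cfc f ρ = (hH.eigenvectorUnitary : Matrix (Fin n) (Fin n) ℂ) *
      Matrix.diagonal (fun i => (f (hH.eigenvalues i) : ℂ)) *
      star (hH.eigenvectorUnitary : Matrix (Fin n) (Fin n) ℂ) := by
  rw [hH.cfc_eq]; rfl

lemma logCommSigma {n : ℕ} (σ : Matrix (Fin n) (Fin n) ℂ) (hσ : σ.PosDef)
    (Vj : Matrix (Fin n) (Fin n) ℂ) (ω : ℝ)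
    (heig : σ * Vj * σ⁻¹ = (Real.exp (-ω) : ℂ) • Vj) :
    cfc Real.log σ * Vj - Vj * cfc Real.log σ = (-(ω:ℂ)) • Vj := by
  have hH : σ.IsHermitian := hσ.1
  set u : Matrix (Fin n) (Fin n) ℂ := (hH.eigenvectorUnitary : Matrix (Fin n) (Fin n) ℂ) with hu_def
  set lam : Fin n → ℝ := hH.eigenvalues with hlam_def
  have hlp : ∀ i, 0 < lam i := hσ.eigenvalues_pos
  have hu1 : u * star u = 1 := (Matrix.mem_unitaryGroup_iff).mp hH.eigenvectorUnitary.2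
  have hu2 : star u * u = 1 := (Matrix.mem_unitaryGroup_iff').mp hH.eigenvectorUnitary.2
  have hl : ∀ M : Matrix (Fin n) (Fin n) ℂ, u * (star u * M) = M := fun M => by
    rw [← Matrix.mul_assoc, hu1, Matrix.one_mul]
  have hl' : ∀ M : Matrix (Fin n) (Fin n) ℂ, star u * (u * M) = M := fun M => by
    rw [← Matrix.mul_assoc, hu2, Matrix.one_mul]
  set W : Matrix (Fin n) (Fin n) ℂ := star u * Vj * u with hW_def
  have hσd : σ = u * Matrix.diagonal (fun p => (lam p : ℂ)) * star u := hH.spectral_theorem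
  have hVj : Vj = u * W * star u := by
    rw [hW_def, Matrix.mul_assoc (star u), hl, Matrix.mul_assoc, hu1, Matrix.mul_one]
  have hdet : IsUnit σ.det := isUnit_iff_ne_zero.mpr (ne_of_gt hσ.det_pos)
  have hinvσ : σ⁻¹ * σ = 1 := Matrix.nonsing_inv_mul σ hdet
  have hσV : σ * Vj = (Real.exp (-ω) : ℂ) • (Vj * σ) := by
    have h := congrArg (fun M => M * σ) heig
    rw [Matrix.mul_assoc (σ * Vj), hinvσ, Matrix.mul_one, Matrix.smul_mul] at h
    exact h
  have e1 : star u * (σ * Vj) * u = Matrix.diagonal (fun p => (lam p : ℂ)) * W := by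
    rw [hσd, hW_def]
    simp only [Matrix.mul_assoc, hl']
  have e2 : star u * (σ * Vj) * u
      = (Real.exp (-ω) : ℂ) • (W * Matrix.diagonal (fun p => (lam p : ℂ))) := by
    rw [hσV, Matrix.mul_smul, Matrix.smul_mul]
    rw [hσd, hW_def]
    simp only [Matrix.mul_assoc, hl', hu2, Matrix.mul_one]
  have hDW := diagComm' lam hlp W ω (e1 ▸ e2)
  have hfinal : cfc Real.log σ * Vj - Vj * cfc Real.log σ
      = u * (Matrix.diagonal (fun p => (Real.log (lam p) : ℂ)) * W
          - W * Matrix.diagonal (fun p => (Real.log (lam p) : ℂ))) * star u := by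
    rw [cfc_spectral' σ hH, ← hu_def, ← hlam_def]
    conv_lhs => rw [hVj]
    simp only [Matrix.mul_sub, Matrix.sub_mul, Matrix.mul_assoc, hl']
  rw [hfinal, hDW, Matrix.mul_smul, Matrix.smul_mul, ← hVj]

/-- Gradient flow identity: under the detailed balance hypotheses (`V_j` eigenvectors of the
modular operator of `σ` with eigenvalues `e^{-ω_j}`, `{V_j} = {V_j*}`, `ω_{j*} = −ω_j`), with
`ρ̂_j = ∫₀¹ (e^{ω_j/2}ρ)^{1−s} ⊗ (e^{−ω_j/2}ρ)^{s} ds`, `∂_j A = [V_j,A]`, `∂_j† A = [V_j*,A]`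
and `K_ρ A = Σ_j ∂_j†(ρ̂_j # ∂_j A)`, every positive definite density matrix `ρ` satisfies
`K_ρ(log ρ − log σ) = − L†ρ` where `L†ρ = Σ_j e^{-ω_j/2}([V_j, ρV_j*] + [V_jρ, V_j*])`. -/
theorem stmt_13 (n : ℕ) (J : Type*) [Fintype J]
    (σ ρ : Matrix (Fin n) (Fin n) ℂ) (hσ : σ.PosDef) (hρ : ρ.PosDef)
    (htrσ : σ.trace = 1) (htrρ : ρ.trace = 1)
    (V : J → Matrix (Fin n) (Fin n) ℂ) (ω : J → ℝ) (inv : J → J)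
    (hinv : ∀ j, inv (inv j) = j)
    (hVs : ∀ j, V (inv j) = (V j)ᴴ)
    (hωs : ∀ j, ω (inv j) = -(ω j))
    (heig : ∀ j, σ * V j * σ⁻¹ = (Real.exp (-(ω j)) : ℂ) • V j)
    -- `pw c t = (e^c ρ)^t`, defined by functional calculus
    (pw : ℝ → ℝ → Matrix (Fin n) (Fin n) ℂ)
    (hpw : ∀ c t, pw c t = cfc (fun x : ℝ => (Real.exp c * x) ^ t) ρ)
    -- `hash j C = ρ̂_j # C = ∫₀¹ (e^{ω_j/2}ρ)^{1−s} C (e^{−ω_j/2}ρ)^{s} ds`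
    (hash : J → Matrix (Fin n) (Fin n) ℂ → Matrix (Fin n) (Fin n) ℂ)
    (hhash : ∀ j C, hash j C = Matrix.of fun i k =>
        ∫ s in (0:ℝ)..1, (pw (ω j / 2) (1 - s) * C * pw (-(ω j) / 2) s) i k) :
    (∑ j, ((V j)ᴴ * hash j (V j * (cfc Real.log ρ - cfc Real.log σ)
                              - (cfc Real.log ρ - cfc Real.log σ) * V j)
            - hash j (V j * (cfc Real.log ρ - cfc Real.log σ)
                              - (cfc Real.log ρ - cfc Real.log σ) * V j) * (V j)ᴴ))
      = - ∑ j, (Real.exp (-(ω j) / 2) : ℂ) •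
            ((V j * (ρ * (V j)ᴴ) - (ρ * (V j)ᴴ) * V j)
              + ((V j * ρ) * (V j)ᴴ - (V j)ᴴ * (V j * ρ))) := by
  have hlogσ : ∀ j, cfc Real.log σ * V j - V j * cfc Real.log σ = (-(ω j : ℂ)) • V j :=
    fun j => logCommSigma σ hσ (V j) (ω j) (heig j)
  set X : Matrix (Fin n) (Fin n) ℂ := cfc Real.log ρ - cfc Real.log σ with hX_def
  have hCj : ∀ j, V j * X - X * V j
      = V j * cfc Real.log ρ - cfc Real.log ρ * V j - ((ω j : ℂ)) • V j := by
    intro j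
    have h' : V j * cfc Real.log σ - cfc Real.log σ * V j = ((ω j : ℂ)) • V j := by
      rw [← neg_sub (cfc Real.log σ * V j) (V j * cfc Real.log σ), hlogσ j, neg_smul, neg_neg]
    calc V j * X - X * V j
        = (V j * cfc Real.log ρ - cfc Real.log ρ * V j)
            - (V j * cfc Real.log σ - cfc Real.log σ * V j) := by
          rw [hX_def, Matrix.mul_sub, Matrix.sub_mul]
          abel
      _ = V j * cfc Real.log ρ - cfc Real.log ρ * V j - ((ω j : ℂ)) • V j := by rw [h']
  have hhashj : ∀ j, hash j (V j * X - X * V j)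
      = (Real.exp (-(ω j) / 2) : ℂ) • (V j * ρ) - (Real.exp (ω j / 2) : ℂ) • (ρ * V j) := by
    intro j
    rw [hhash]
    simp only [hCj j]
    exact keyB ρ hρ (V j) (ω j) pw hpw
  simp only [hhashj]
  have hreindex : ∑ j, (Real.exp (ω j / 2) : ℂ) •
        ((V j)ᴴ * (ρ * V j) - (ρ * V j) * (V j)ᴴ)
      = ∑ j, (Real.exp (-(ω j) / 2) : ℂ) •
        (V j * (ρ * (V j)ᴴ) - (ρ * (V j)ᴴ) * V j) := by
    refine Fintype.sum_bijective inv (Function.Involutive.bijective hinv) _ _ fun j => ?_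
    rw [hωs j, hVs j]
    simp only [neg_neg, conjTranspose_conjTranspose]
  calc (∑ j, ((V j)ᴴ * ((Real.exp (-(ω j) / 2) : ℂ) • (V j * ρ)
            - (Real.exp (ω j / 2) : ℂ) • (ρ * V j))
          - ((Real.exp (-(ω j) / 2) : ℂ) • (V j * ρ)
            - (Real.exp (ω j / 2) : ℂ) • (ρ * V j)) * (V j)ᴴ))
      = ∑ j, ((Real.exp (-(ω j) / 2) : ℂ) • ((V j)ᴴ * (V j * ρ) - (V j * ρ) * (V j)ᴴ)
          - (Real.exp (ω j / 2) : ℂ) • ((V j)ᴴ * (ρ * V j) - (ρ * V j) * (V j)ᴴ)) := by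
        refine Finset.sum_congr rfl fun j _ => ?_
        simp only [Matrix.mul_sub, Matrix.sub_mul, Matrix.mul_smul, Matrix.smul_mul, smul_sub]
        abel
    _ = (∑ j, (Real.exp (-(ω j) / 2) : ℂ) • ((V j)ᴴ * (V j * ρ) - (V j * ρ) * (V j)ᴴ))
          - ∑ j, (Real.exp (ω j / 2) : ℂ) • ((V j)ᴴ * (ρ * V j) - (ρ * V j) * (V j)ᴴ) :=
        Finset.sum_sub_distrib _ _
    _ = (∑ j, (Real.exp (-(ω j) / 2) : ℂ) • ((V j)ᴴ * (V j * ρ) - (V j * ρ) * (V j)ᴴ))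
          - ∑ j, (Real.exp (-(ω j) / 2) : ℂ) •
              (V j * (ρ * (V j)ᴴ) - (ρ * (V j)ᴴ) * V j) := by rw [hreindex]
    _ = - ∑ j, (Real.exp (-(ω j) / 2) : ℂ) •
            ((V j * (ρ * (V j)ᴴ) - (ρ * (V j)ᴴ) * V j)
              + ((V j * ρ) * (V j)ᴴ - (V j)ᴴ * (V j * ρ))) := by
        rw [← Finset.sum_sub_distrib, ← Finset.sum_neg_distrib]
        refine Finset.sum_congr rfl fun j _ => ?_
        rw [← smul_sub, ← smul_neg]
        congr 1
        noncomm_ring
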